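/- arXiv:1008.3216 — 3 statements merged into one kernel-verified Lean document; each statement's English description precedes it below -/
import Mathlib

section
/- Let G be a finite simple graph, M a maximum matching of G, and k the number of bad vertices of G with respect to M. Then the number of edges uv ∈ M for which some bad vertex is adjacent to both u and v is at least k; equivalently, there are at least k bad triangles with pairwise distinct matching edges. -/
open SimpleGraph

/-- A total cover of a simple graph `G`: a pair of a vertex set `SV` and an edge set
`SE ⊆ E(G)` such that every vertex not in `SV` is adjacent to a vertex of `SV` or is an
endpoint of an edge of `SE`, and every edge not in `SE` has an endpoint in `SV` or shares
an endpoint with an edge of `SE`. -/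
def IsTotalCover {V : Type*} (G : SimpleGraph V) (SV : Set V) (SE : Set (Sym2 V)) : Prop :=
  SE ⊆ G.edgeSet ∧
  (∀ v : V, v ∉ SV → (∃ u ∈ SV, G.Adj v u) ∨ (∃ e ∈ SE, v ∈ e)) ∧
  (∀ e ∈ G.edgeSet, e ∉ SE → (∃ v ∈ SV, v ∈ e) ∨ (∃ f ∈ SE, ∃ v : V, v ∈ e ∧ v ∈ f))

/-- A matching of `G`: a set of edges of `G` that are pairwise vertex-disjoint. -/
def IsMatchingSet {V : Type*} (G : SimpleGraph V) (M : Set (Sym2 V)) : Prop :=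
  M ⊆ G.edgeSet ∧ ∀ e ∈ M, ∀ f ∈ M, e ≠ f → ∀ v : V, v ∈ e → v ∉ f

/-- A maximum matching of `G`: a matching of largest cardinality. -/
def IsMaximumMatching {V : Type*} (G : SimpleGraph V) (M : Set (Sym2 V)) : Prop :=
  IsMatchingSet G M ∧ ∀ M' : Set (Sym2 V), IsMatchingSet G M' → M'.ncard ≤ M.ncard

/-- A vertex is covered by a matching `M` if it is an endpoint of some edge of `M`. -/
def CoveredBy {V : Type*} (M : Set (Sym2 V)) (v : V) : Prop :=
  ∃ e ∈ M, v ∈ e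

/-- A bad vertex with respect to a matching `M`: a vertex not covered by `M` which is
adjacent to both endpoints of some edge of `M`. -/
def IsBad {V : Type*} (G : SimpleGraph V) (M : Set (Sym2 V)) (w : V) : Prop :=
  ¬ CoveredBy M w ∧ ∃ u v : V, s(u, v) ∈ M ∧ G.Adj w u ∧ G.Adj w v

/-- An isolated vertex: a vertex of degree 0, i.e. adjacent to no vertex. -/
def IsIsolated {V : Type*} (G : SimpleGraph V) (v : V) : Prop :=
  ∀ u : V, ¬ G.Adj v u

/-- The total graph `T(G)` of `G`: its vertices are the vertices and edges of `G`, with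
adjacency given by adjacency/incidence in `G`. -/
def totalGraph {V : Type*} (G : SimpleGraph V) : SimpleGraph (V ⊕ G.edgeSet) where
  Adj x y :=
    match x, y with
    | .inl a, .inl b => G.Adj a b
    | .inl a, .inr e => a ∈ e.1
    | .inr e, .inl a => a ∈ e.1
    | .inr e, .inr f => e ≠ f ∧ ∃ v : V, v ∈ e.1 ∧ v ∈ f.1
  symm := by
    constructor
    rintro (a | e) (b | f) h
    · exact G.adj_symm h
    · exact h
    · exact h
    · exact ⟨h.1.symm, by obtain ⟨v, h1, h2⟩ := h.2; exact ⟨v, h2, h1⟩⟩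
  loopless := by
    constructor
    rintro (a | e) h
    · exact G.loopless.irrefl a h
    · exact h.1 rfl

private lemma aug_contra {V : Type*} [Fintype V] (G : SimpleGraph V)
    (M : Set (Sym2 V)) (hM : IsMaximumMatching G M)
    (u v w1 w2 : V) (he : s(u, v) ∈ M)
    (hw1 : ¬ CoveredBy M w1) (hw2 : ¬ CoveredBy M w2) (hne : w1 ≠ w2)
    (a1 : G.Adj w1 u) (a2 : G.Adj w2 v) : False := by
  classical
  have hGuv : G.Adj u v := hM.1.1 he
  have huv : u ≠ v := hGuv.ne
  have hw1u : w1 ≠ u := fun h => hw1 ⟨s(u,v), he, by simp [h]⟩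
  have hw1v : w1 ≠ v := fun h => hw1 ⟨s(u,v), he, by simp [h]⟩
  have hw2u : w2 ≠ u := fun h => hw2 ⟨s(u,v), he, by simp [h]⟩
  have hw2v : w2 ≠ v := fun h => hw2 ⟨s(u,v), he, by simp [h]⟩
  set e1 : Sym2 V := s(w1, u) with he1
  set e2 : Sym2 V := s(v, w2) with he2
  set M' : Set (Sym2 V) := insert e1 (insert e2 (M \ {s(u,v)})) with hM'
  have havoid : ∀ f ∈ M \ {s(u,v)}, w1 ∉ f ∧ w2 ∉ f ∧ u ∉ f ∧ v ∉ f := by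
    rintro f ⟨hfM, hfne⟩
    have hfne' : f ≠ s(u,v) := fun hh => hfne (by simp [hh])
    refine ⟨fun h => hw1 ⟨f, hfM, h⟩, fun h => hw2 ⟨f, hfM, h⟩, ?_, ?_⟩
    · exact fun h => hM.1.2 f hfM (s(u,v)) he hfne' u h (by simp)
    · exact fun h => hM.1.2 f hfM (s(u,v)) he hfne' v h (by simp)
  have hmem : ∀ x : V, x ∈ e1 → x = w1 ∨ x = u := by
    intro x hx; simpa [he1, Sym2.mem_iff] using hx
  have hmem2 : ∀ x : V, x ∈ e2 → x = v ∨ x = w2 := by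
    intro x hx; simpa [he2, Sym2.mem_iff] using hx
  have hmatch : IsMatchingSet G M' := by
    constructor
    · intro f hf
      rcases hf with rfl | rfl | hf
      · simp only [he1, SimpleGraph.mem_edgeSet]; exact a1
      · simp only [he2, SimpleGraph.mem_edgeSet]; exact a2.symm
      · exact hM.1.1 hf.1
    · intro f hf g hg hfg x hxf hxg
      rcases hf with rfl | rfl | hf <;> rcases hg with rfl | rfl | hg
      · exact hfg rfl
      · rcases hmem x hxf with rfl | rfl <;> rcases hmem2 x hxg with h | h
        · exact hw1v h
        · exact hne h
        · exact huv h
        · exact hw2u h.symm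
      · rcases hmem x hxf with rfl | rfl
        · exact (havoid g hg).1 hxg
        · exact (havoid g hg).2.2.1 hxg
      · rcases hmem2 x hxf with rfl | rfl <;> rcases hmem x hxg with h | h
        · exact hw1v h.symm
        · exact huv h.symm
        · exact hne h.symm
        · exact hw2u h
      · exact hfg rfl
      · rcases hmem2 x hxf with rfl | rfl
        · exact (havoid g hg).2.2.2 hxg
        · exact (havoid g hg).2.1 hxg
      · rcases hmem x hxg with rfl | rfl
        · exact (havoid f hf).1 hxf
        · exact (havoid f hf).2.2.1 hxf
      · rcases hmem2 x hxg with rfl | rfl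
        · exact (havoid f hf).2.2.2 hxf
        · exact (havoid f hf).2.1 hxf
      · exact hM.1.2 f hf.1 g hg.1 hfg x hxf hxg
  have hle := hM.2 M' hmatch
  have he1ne2 : e1 ≠ e2 := by
    intro h
    have hx : w1 ∈ e2 := h ▸ (by simp [he1] : w1 ∈ e1)
    rcases hmem2 w1 hx with h' | h'
    · exact hw1v h'
    · exact hne h'
  have he1nM : e1 ∉ M \ {s(u,v)} := fun h => (havoid e1 h).1 (by simp [he1])
  have he2nM : e2 ∉ M \ {s(u,v)} := fun h => (havoid e2 h).2.1 (by simp [he2])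
  have hfin : (M \ {s(u,v)}).Finite := Set.toFinite _
  have hc1 : M'.ncard = (M \ {s(u,v)}).ncard + 2 := by
    rw [hM', Set.ncard_insert_of_notMem (by simp [he1ne2, he1nM]) (hfin.insert _),
        Set.ncard_insert_of_notMem he2nM hfin]
  have hc2 : (M \ {s(u,v)}).ncard = M.ncard - 1 :=
    Set.ncard_diff_singleton_of_mem he
  have hpos : 1 ≤ M.ncard :=
    (Set.ncard_pos (Set.toFinite _)).mpr ⟨_, he⟩
  omega

/-- the number of matching edges of a maximum matching `M` whose two
endpoints are both adjacent to some bad vertex is at least the number `k` of bad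
vertices. -/
theorem stmt_8 {V : Type*} [Fintype V] (G : SimpleGraph V)
    (M : Set (Sym2 V)) (hM : IsMaximumMatching G M)
    (k : ℕ) (hk : {w : V | IsBad G M w}.ncard = k) :
    k ≤ {e ∈ M | ∃ w u v : V, IsBad G M w ∧ e = s(u, v) ∧
          G.Adj w u ∧ G.Adj w v}.ncard := by
  classical
  subst hk
  set S := {e ∈ M | ∃ w u v : V, IsBad G M w ∧ e = s(u, v) ∧
          G.Adj w u ∧ G.Adj w v} with hS
  have hch : ∀ w : V, IsBad G M w → ∃ e, e ∈ S ∧ ∃ u v : V, e = s(u, v) ∧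
      G.Adj w u ∧ G.Adj w v := by
    intro w hw
    obtain ⟨hnc, u, v, huvM, hau, hav⟩ := hw
    exact ⟨s(u,v), ⟨huvM, w, u, v, ⟨hnc, u, v, huvM, hau, hav⟩, rfl, hau, hav⟩,
      u, v, rfl, hau, hav⟩
  set f : V → Sym2 V := fun w =>
    if h : IsBad G M w then Classical.choose (hch w h) else s(w, w) with hf
  have hfspec : ∀ w (h : IsBad G M w), f w ∈ S ∧ ∃ u v : V, f w = s(u, v) ∧
      G.Adj w u ∧ G.Adj w v := by
    intro w h
    simp only [hf, dif_pos h]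
    exact Classical.choose_spec (hch w h)
  refine Set.ncard_le_ncard_of_injOn f (fun w hw => (hfspec w hw).1) ?_ (Set.toFinite _)
  intro w1 hw1 w2 hw2 heq
  by_contra hne
  obtain ⟨_, u1, v1, he1, ha1, hb1⟩ := hfspec w1 hw1
  obtain ⟨hS2, u2, v2, he2, ha2, hb2⟩ := hfspec w2 hw2
  have heM : f w2 ∈ M := hS2.1
  have heq' : s(u1, v1) = s(u2, v2) := by rw [← he1, ← he2, heq]
  have hadj2 : G.Adj w2 u1 ∧ G.Adj w2 v1 := by
    rcases Sym2.eq_iff.mp heq' with ⟨rfl, rfl⟩ | ⟨rfl, rfl⟩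
    · exact ⟨ha2, hb2⟩
    · exact ⟨hb2, ha2⟩
  have heM1 : s(u1, v1) ∈ M := he1 ▸ (hfspec w1 hw1).1.1
  exact aug_contra G M hM u1 v1 w1 w2 heM1 hw1.1 hw2.1 hne ha1 hadj2.2
end

section
/- Let G be a finite simple graph and M a maximum matching of G such that G has no bad vertices with respect to M. Then for every edge uv ∈ M, at most one of u and v is adjacent to some vertex not covered by M; that is, it cannot happen that u is adjacent to a vertex x not covered by M and v is adjacent to a vertex y not covered by M. -/
open SimpleGraph

/-- if `G` has no bad vertices with respect to a maximum matching `M`,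
then for every edge `uv ∈ M` at most one of `u` and `v` is adjacent to a vertex not
covered by `M`. -/
theorem stmt_10 {V : Type*} [Fintype V] (G : SimpleGraph V)
    (M : Set (Sym2 V)) (hM : IsMaximumMatching G M)
    (hbad : ∀ w : V, ¬ IsBad G M w)
    (u v : V) (huv : s(u, v) ∈ M) :
    ¬ ((∃ x : V, ¬ CoveredBy M x ∧ G.Adj u x) ∧
       (∃ y : V, ¬ CoveredBy M y ∧ G.Adj v y)) := by
  rintro ⟨⟨x, hx, hux⟩, ⟨y, hy, hvy⟩⟩
  classical
  have hedge : G.Adj u v := hM.1.1 huv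
  have huvne : u ≠ v := hedge.ne
  have hxy : x ≠ y := by
    rintro rfl
    exact hbad x ⟨hx, u, v, huv, hux.symm, hvy.symm⟩
  have hxu : x ≠ u := by intro h; rw [h] at hx; exact hx ⟨s(u, v), huv, Sym2.mem_mk_left _ _⟩
  have hxv : x ≠ v := by intro h; rw [h] at hx; exact hx ⟨s(u, v), huv, Sym2.mem_mk_right _ _⟩
  have hyu : y ≠ u := by intro h; rw [h] at hy; exact hy ⟨s(u, v), huv, Sym2.mem_mk_left _ _⟩
  have hyv : y ≠ v := by intro h; rw [h] at hy; exact hy ⟨s(u, v), huv, Sym2.mem_mk_right _ _⟩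
  -- u and v are not in any edge of M other than s(u,v)
  have hunotin : ∀ e ∈ M, e ≠ s(u, v) → u ∉ e :=
    fun e he hne hu => hM.1.2 e he _ huv hne u hu (Sym2.mem_mk_left _ _)
  have hvnotin : ∀ e ∈ M, e ≠ s(u, v) → v ∉ e :=
    fun e he hne hv => hM.1.2 e he _ huv hne v hv (Sym2.mem_mk_right _ _)
  have hxnotin : ∀ e ∈ M, x ∉ e := fun e he hxe => hx ⟨e, he, hxe⟩
  have hynotin : ∀ e ∈ M, y ∉ e := fun e he hye => hy ⟨e, he, hye⟩
  set M' : Set (Sym2 V) := insert s(u, x) (insert s(v, y) (M \ {s(u, v)})) with hM'def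
  have hmemux : s(u, x) ∉ insert s(v, y) (M \ {s(u, v)}) := by
    intro h
    rcases h with h | ⟨h1, _⟩
    · have : u ∈ s(v, y) := h ▸ Sym2.mem_mk_left u x
      rw [Sym2.mem_iff] at this
      rcases this with h | h
      · exact huvne h
      · exact hyu h.symm
    · exact hxnotin _ h1 (Sym2.mem_mk_right u x)
  have hmemvy : s(v, y) ∉ M \ {s(u, v)} := fun ⟨h1, _⟩ => hynotin _ h1 (Sym2.mem_mk_right v y)
  have hmemuv : s(u, v) ∈ M := huv
  -- M' is a matching
  have hmatch : IsMatchingSet G M' := by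
    constructor
    · rintro e (rfl | rfl | ⟨he, _⟩)
      · exact hux
      · exact hvy
      · exact hM.1.1 he
    · -- pairwise disjointness
      have key : ∀ e ∈ M', ∀ w : V, w ∈ e →
          (e = s(u, x) → (w = u ∨ w = x)) ∧ True := by
        intro e _ w hw
        exact ⟨fun h => by rw [h, Sym2.mem_iff] at hw; exact hw, trivial⟩
      rintro e he f hf hef w hwe hwf
      have mem_char : ∀ g ∈ M', ∀ z : V, z ∈ g →
          (g = s(u, x) ∧ (z = u ∨ z = x)) ∨ (g = s(v, y) ∧ (z = v ∨ z = y)) ∨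
          (g ∈ M ∧ g ≠ s(u, v)) := by
        rintro g (rfl | rfl | ⟨hg1, hg2⟩) z hz
        · left; exact ⟨rfl, Sym2.mem_iff.mp hz⟩
        · right; left; exact ⟨rfl, Sym2.mem_iff.mp hz⟩
        · right; right; exact ⟨hg1, fun h => hg2 (by simp [h])⟩
      rcases mem_char e he w hwe with ⟨rfl, hw⟩ | ⟨rfl, hw⟩ | ⟨heM, hene⟩ <;>
        rcases mem_char f hf w hwf with ⟨rfl, hw'⟩ | ⟨rfl, hw'⟩ | ⟨hfM, hfne⟩
      · exact hef rfl
      · rcases hw with rfl | rfl <;> rcases hw' with h | h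
        · exact huvne h
        · exact hyu h.symm
        · exact hxv h
        · exact hxy h
      · rcases hw with rfl | rfl
        · exact hunotin f hfM hfne hwf
        · exact hxnotin f hfM hwf
      · rcases hw with rfl | rfl <;> rcases hw' with h | h
        · exact huvne h.symm
        · exact hxv h.symm
        · exact hyu h
        · exact hxy h.symm
      · exact hef rfl
      · rcases hw with rfl | rfl
        · exact hvnotin f hfM hfne hwf
        · exact hynotin f hfM hwf
      · rcases hw' with rfl | rfl
        · exact hunotin e heM hene hwe
        · exact hxnotin e heM hwe
      · rcases hw' with rfl | rfl
        · exact hvnotin e heM hene hwe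
        · exact hynotin e heM hwe
      · exact hM.1.2 e heM f hfM hef w hwe hwf
  have hfin : M.Finite := Set.toFinite M
  have hfin' : (M \ {s(u, v)}).Finite := hfin.diff
  have hcard : M'.ncard = M.ncard + 1 := by
    rw [hM'def, Set.ncard_insert_of_notMem hmemux ((hfin'.insert _)),
        Set.ncard_insert_of_notMem hmemvy hfin',
        Set.ncard_diff_singleton_of_mem hmemuv]
    have hpos : 0 < M.ncard := (Set.ncard_pos hfin).mpr ⟨_, hmemuv⟩
    omega
  have := hM.2 M' hmatch
  omega
end

section
/- For every even natural number n ≥ 2, let H_n be the simple graph with vertex set {v} ∪ {u₁, …, u_n} ∪ {v₁, …, v_n} and edge set consisting of the edges u_i v_i for 1 ≤ i ≤ n, the edges v v_i for 1 ≤ i ≤ n, and the edges u_{2j−1} u_{2j} for 1 ≤ j ≤ n/2. Then the pair (S_V, S_E) with S_V = {v} and S_E = {u_{2j−1} u_{2j} : 1 ≤ j ≤ n/2} is a total cover of H_n of size n/2 + 1. -/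
open SimpleGraph

/-- The hub vertex `v` of the graph `Hₙ`. -/
def hub (n : ℕ) : Unit ⊕ Fin n ⊕ Fin n := Sum.inl ()

/-- The vertex `uᵢ` of the graph `Hₙ` (0-indexed: `uu n i` is `u_{i+1}`). -/
def uu (n : ℕ) (i : Fin n) : Unit ⊕ Fin n ⊕ Fin n := Sum.inr (Sum.inl i)

/-- The vertex `vᵢ` of the graph `Hₙ` (0-indexed: `vv n i` is `v_{i+1}`). -/
def vv (n : ℕ) (i : Fin n) : Unit ⊕ Fin n ⊕ Fin n := Sum.inr (Sum.inr i)

/-- The graph `Hₙ` on the vertex set `{v} ∪ {u₁, …, uₙ} ∪ {v₁, …, vₙ}`, with edges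
`uᵢvᵢ` (`1 ≤ i ≤ n`), `v vᵢ` (`1 ≤ i ≤ n`), and `u_{2j-1} u_{2j}` (`1 ≤ j ≤ n/2`);
in the 0-indexed encoding the last family consists of the edges `uu n i -- uu n (i+1)`
for even `i` with `i + 1 < n`. -/
def Hgraph (n : ℕ) : SimpleGraph (Unit ⊕ Fin n ⊕ Fin n) :=
  SimpleGraph.fromEdgeSet
    ({e : Sym2 (Unit ⊕ Fin n ⊕ Fin n) | ∃ i : Fin n, e = s(uu n i, vv n i)} ∪
     {e : Sym2 (Unit ⊕ Fin n ⊕ Fin n) | ∃ i : Fin n, e = s(hub n, vv n i)} ∪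
     {e : Sym2 (Unit ⊕ Fin n ⊕ Fin n) | ∃ i : Fin n, i.val % 2 = 0 ∧
        ∃ h : i.val + 1 < n, e = s(uu n i, uu n ⟨i.val + 1, h⟩)})

/-- for even `n ≥ 2`, the pair consisting of the hub vertex `v` and the
edges `u_{2j-1}u_{2j}` (`1 ≤ j ≤ n/2`) is a total cover of `Hₙ` of size `n/2 + 1`. -/
theorem stmt_13 (n : ℕ) (hn : 2 ≤ n) (heven : Even n) :
    IsTotalCover (Hgraph n) {hub n}
      {e : Sym2 (Unit ⊕ Fin n ⊕ Fin n) | ∃ i : Fin n, i.val % 2 = 0 ∧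
        ∃ h : i.val + 1 < n, e = s(uu n i, uu n ⟨i.val + 1, h⟩)} ∧
    ({hub n} : Set (Unit ⊕ Fin n ⊕ Fin n)).ncard +
      {e : Sym2 (Unit ⊕ Fin n ⊕ Fin n) | ∃ i : Fin n, i.val % 2 = 0 ∧
        ∃ h : i.val + 1 < n, e = s(uu n i, uu n ⟨i.val + 1, h⟩)}.ncard = n / 2 + 1 := by
  have hn2 : n % 2 = 0 := Nat.even_iff.mp heven
  set SE : Set (Sym2 (Unit ⊕ Fin n ⊕ Fin n)) :=
    {e : Sym2 (Unit ⊕ Fin n ⊕ Fin n) | ∃ i : Fin n, i.val % 2 = 0 ∧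
        ∃ h : i.val + 1 < n, e = s(uu n i, uu n ⟨i.val + 1, h⟩)} with hSE
  have huune : ∀ i j : Fin n, i ≠ j → uu n i ≠ uu n j := by
    intro i j hij h
    simp [uu] at h
    exact hij h
  constructor
  · refine ⟨?_, ?_, ?_⟩
    · rintro e ⟨i, hi, hlt, rfl⟩
      rw [Hgraph, SimpleGraph.edgeSet_fromEdgeSet]
      constructor
      · right
        exact ⟨i, hi, hlt, rfl⟩
      · simp only [Sym2.diagSet, Set.mem_setOf_eq, Sym2.isDiag_iff_proj_eq]
        exact huune i ⟨i.val + 1, hlt⟩ (Fin.ne_of_val_ne (by simp))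
    · rintro (⟨⟩ | i | i) hv
      · exact absurd rfl hv
      · -- vertex uu n i : covered by matching edge
        right
        rcases Nat.even_or_odd i.val with he | ho
        · have h0 : i.val % 2 = 0 := Nat.even_iff.mp he
          have hlt : i.val + 1 < n := by
            have := i.isLt; omega
          exact ⟨s(uu n i, uu n ⟨i.val+1, hlt⟩), ⟨i, h0, hlt, rfl⟩, by simp [uu]⟩
        · have h1 : i.val % 2 = 1 := Nat.odd_iff.mp ho
          have hpos : 1 ≤ i.val := by omega
          have hlt : i.val - 1 < n := by have := i.isLt; omega
          have h0 : (⟨i.val - 1, hlt⟩ : Fin n).val % 2 = 0 := by simp; omega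
          have hlt2 : (⟨i.val - 1, hlt⟩ : Fin n).val + 1 < n := by have := i.isLt; simp; omega
          refine ⟨s(uu n ⟨i.val-1, hlt⟩, uu n ⟨(⟨i.val-1, hlt⟩ : Fin n).val + 1, hlt2⟩),
            ⟨⟨i.val-1, hlt⟩, h0, hlt2, rfl⟩, ?_⟩
          have : (⟨(⟨i.val - 1, hlt⟩ : Fin n).val + 1, hlt2⟩ : Fin n) = i := by
            apply Fin.ext; simp; omega
          rw [this]
          simp [uu]
      · -- vertex vv n i : adjacent to hub
        left
        refine ⟨hub n, rfl, ?_⟩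
        rw [Hgraph, SimpleGraph.fromEdgeSet_adj]
        constructor
        · left; right
          exact ⟨i, Sym2.eq_swap⟩
        · simp [vv, hub]
    · rintro e he hne
      rw [Hgraph, SimpleGraph.edgeSet_fromEdgeSet] at he
      rcases he.1 with (⟨i, rfl⟩ | ⟨i, rfl⟩) | h3
      · -- edge uu i -- vv i : shares uu i with matching edge
        right
        rcases Nat.even_or_odd i.val with hev | ho
        · have h0 : i.val % 2 = 0 := Nat.even_iff.mp hev
          have hlt : i.val + 1 < n := by have := i.isLt; omega
          exact ⟨s(uu n i, uu n ⟨i.val+1, hlt⟩), ⟨i, h0, hlt, rfl⟩, uu n i, by simp, by simp⟩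
        · have h1 : i.val % 2 = 1 := Nat.odd_iff.mp ho
          have hlt : i.val - 1 < n := by have := i.isLt; omega
          have h0 : (⟨i.val - 1, hlt⟩ : Fin n).val % 2 = 0 := by simp; omega
          have hlt2 : (⟨i.val - 1, hlt⟩ : Fin n).val + 1 < n := by have := i.isLt; simp; omega
          refine ⟨s(uu n ⟨i.val-1, hlt⟩, uu n ⟨(⟨i.val-1, hlt⟩ : Fin n).val + 1, hlt2⟩),
            ⟨⟨i.val-1, hlt⟩, h0, hlt2, rfl⟩, uu n i, by simp, ?_⟩
          have : (⟨(⟨i.val - 1, hlt⟩ : Fin n).val + 1, hlt2⟩ : Fin n) = i := by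
            apply Fin.ext; simp; omega
          rw [this]; simp
      · left; exact ⟨hub n, rfl, by simp⟩
      · exact absurd h3 hne
  · -- cardinality
    have h1 : ({hub n} : Set (Unit ⊕ Fin n ⊕ Fin n)).ncard = 1 := Set.ncard_singleton _
    have hrange : SE = Set.range (fun j : Fin (n/2) =>
        s(uu n ⟨2*j.val, by have := j.isLt; omega⟩, uu n ⟨2*j.val+1, by have := j.isLt; omega⟩)) := by
      ext e
      constructor
      · rintro ⟨i, hi, hlt, rfl⟩
        have hdiv : i.val / 2 < n / 2 := by omega
        refine ⟨⟨i.val / 2, hdiv⟩, ?_⟩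
        have e1 : ∀ h : 2 * (i.val / 2) < n, (⟨2 * (i.val / 2), h⟩ : Fin n) = i :=
          fun _ => Fin.ext (by simp; omega)
        have e2 : ∀ h : 2 * (i.val / 2) + 1 < n,
            (⟨2 * (i.val / 2) + 1, h⟩ : Fin n) = ⟨i.val + 1, hlt⟩ :=
          fun _ => Fin.ext (by simp; omega)
        simp only [e1, e2]
      · rintro ⟨j, rfl⟩
        exact ⟨⟨2*j.val, by have := j.isLt; omega⟩, by simp [Nat.mul_mod_right],
          by have := j.isLt; simp; omega, rfl⟩
    have hinj : Function.Injective (fun j : Fin (n/2) =>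
        s(uu n ⟨2*j.val, by have := j.isLt; omega⟩, uu n ⟨2*j.val+1, by have := j.isLt; omega⟩)) := by
      intro a b hab
      simp only [Sym2.eq, Sym2.rel_iff', Prod.mk.injEq, Prod.swap_prod_mk, uu,
        Sum.inr.injEq, Sum.inl.injEq, Fin.mk.injEq] at hab
      apply Fin.ext
      omega
    have h2 : SE.ncard = n / 2 := by
      rw [hrange, ← Set.image_univ, Set.ncard_image_of_injective _ hinj, Set.ncard_univ]
      simp
    rw [h1, h2]
    omega
end
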